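/- Let a1, a2, b1, b2, b12, c2, d2, a be positive real numbers and n a positive integer. Define α = a2*(b12 + b2*c2*d2), β = a1*b1*c2*d2, γ = a2*b2*c2*d2*a^n, δ = a1*b1*c2*d2*a^n. Then the polynomial g(x) = α*x^(n+1) − β*x^n + γ*x − δ has a root y10 in the open interval (0, a1*b1/(a2*b2)). (Indeed g(0) = −δ < 0 and g(a1*b1/(a2*b2)) = (a1*b1/(a2*b2))^n * a1*b1*b12/b2 > 0.) -/

import Mathlib

/-- The equilibrium polynomial has a root in (0, a1*b1/(a2*b2)). -/
theorem stmt_1 (a1 a2 b1 b2 b12 c2 d2 a : ℝ) (n : ℕ)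
    (ha1 : 0 < a1) (ha2 : 0 < a2) (hb1 : 0 < b1) (hb2 : 0 < b2)
    (hb12 : 0 < b12) (hc2 : 0 < c2) (hd2 : 0 < d2) (ha : 0 < a) (hn : 0 < n) :
    ∃ y10 : ℝ, 0 < y10 ∧ y10 < a1 * b1 / (a2 * b2) ∧
      a2 * (b12 + b2 * c2 * d2) * y10 ^ (n + 1)
        - a1 * b1 * c2 * d2 * y10 ^ n
        + a2 * b2 * c2 * d2 * a ^ n * y10
        - a1 * b1 * c2 * d2 * a ^ n = 0 := by
  set R := a1 * b1 / (a2 * b2) with hR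
  have hR0 : 0 < R := by positivity
  set f : ℝ → ℝ := fun x =>
    a2 * (b12 + b2 * c2 * d2) * x ^ (n + 1)
      - a1 * b1 * c2 * d2 * x ^ n
      + a2 * b2 * c2 * d2 * a ^ n * x
      - a1 * b1 * c2 * d2 * a ^ n with hf
  have hcont : ContinuousOn f (Set.Icc 0 R) := by fun_prop
  have hf0 : f 0 < 0 := by
    have h : f 0 = -(a1 * b1 * c2 * d2 * a ^ n) := by
      simp [hf, zero_pow hn.ne']
    rw [h]
    have : 0 < a1 * b1 * c2 * d2 * a ^ n := by positivity
    linarith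
  have hRb : a2 * b2 * R = a1 * b1 := by
    rw [hR]
    field_simp
  have hfR : 0 < f R := by
    have key : f R = a2 * b12 * R ^ (n + 1) := by
      simp only [hf]
      rw [← hRb]
      ring
    rw [key]
    positivity
  have hmem : (0 : ℝ) ∈ Set.Ioo (f 0) (f R) := ⟨hf0, hfR⟩
  obtain ⟨x, hx, hfx⟩ := intermediate_value_Ioo hR0.le hcont hmem
  exact ⟨x, hx.1, hx.2, hfx⟩
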